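/- The second order binary Reed-Muller code R(2,m) with m ≥ 2 has unimodal nonzero weight distribution with largest term A_{2^{m-1}}; in particular, for 1 ≤ j ≤ floor(m/2) - 1, the ratio A_{2^{m-1} - 2^{m-j-2}} / A_{2^{m-1} - 2^{m-j-1}} equals (2^{2j+2}/(2^{2j+2}-1))·(2^{m-2j-1}-1)·(2^{m-2j}-1) ≥ 1, where A_{2^{m-1} - 2^{m-j-1}} = 2^{j^2+j} · (∏_{i=m-2j+1}^{m} (2^i - 1)) / (∏_{i=1}^{j} (2^{2i} - 1)). -/

import Mathlib

open Finset

theorem prod_Icc_bot (f : ℕ → ℚ) {a b : ℕ} (h : a ≤ b) :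
    ∏ i ∈ Icc a b, f i = f a * ∏ i ∈ Icc (a+1) b, f i := by
  rw [← Finset.Ico_add_one_right_eq_Icc, ← Finset.Ico_add_one_right_eq_Icc,
    Finset.prod_eq_prod_Ico_succ_bot (by omega) f]

theorem rm2_side_frequencies_increasing (m j : ℕ) (hm : 2 ≤ m) (hj : 1 ≤ j)
    (hjm : j ≤ m / 2 - 1) :
    let A : ℕ → ℚ := fun j =>
      2 ^ (j ^ 2 + j) * (∏ i ∈ Finset.Icc (m - 2 * j + 1) m, ((2 : ℚ) ^ i - 1)) /
        ∏ i ∈ Finset.Icc 1 j, ((2 : ℚ) ^ (2 * i) - 1)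
    (A (j + 1) / A j =
      ((2 : ℚ) ^ (2 * j + 2) / ((2 : ℚ) ^ (2 * j + 2) - 1)) *
        ((2 : ℚ) ^ (m - 2 * j - 1) - 1) * ((2 : ℚ) ^ (m - 2 * j) - 1)) ∧
    1 ≤ ((2 : ℚ) ^ (2 * j + 2) / ((2 : ℚ) ^ (2 * j + 2) - 1)) *
        ((2 : ℚ) ^ (m - 2 * j - 1) - 1) * ((2 : ℚ) ^ (m - 2 * j) - 1) := by
  intro A
  obtain ⟨t, rfl⟩ : ∃ t, m = 2*j+2+t := ⟨m - (2*j+2), by omega⟩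
  have e1 : 2*j+2+t - 2*j = t+2 := by omega
  have e2 : 2*j+2+t - 2*j - 1 = t+1 := by omega
  have e3 : 2*j+2+t - 2*(j+1) + 1 = t+1 := by omega
  have e4 : 2*j+2+t - 2*j + 1 = t+3 := by omega
  -- positivity of products
  have hQ : (0:ℚ) < ∏ i ∈ Icc (t+3) (2*j+2+t), ((2:ℚ)^i - 1) := by
    apply Finset.prod_pos
    intro i hi
    have : 1 ≤ i := by simp [Finset.mem_Icc] at hi; omega
    have : (2:ℚ)^1 ≤ 2^i := pow_le_pow_right₀ (by norm_num) this
    linarith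
  have hD : (0:ℚ) < ∏ i ∈ Icc 1 j, ((2:ℚ)^(2*i) - 1) := by
    apply Finset.prod_pos
    intro i hi
    have : 1 ≤ 2*i := by simp [Finset.mem_Icc] at hi; omega
    have : (2:ℚ)^1 ≤ 2^(2*i) := pow_le_pow_right₀ (by norm_num) this
    linarith
  have h1 : (1:ℚ) ≤ (2:ℚ)^(t+1) := one_le_pow₀ (by norm_num)
  have h2 : (1:ℚ) ≤ (2:ℚ)^(t+2) := one_le_pow₀ (by norm_num)
  have h3 : (1:ℚ) < (2:ℚ)^(2*j+2) := one_lt_pow₀ (by norm_num) (by omega)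
  constructor
  · show A (j+1) / A j = _
    simp only [A, e1, e2, e3, e4, show t+2-1 = t+1 from rfl]
    rw [prod_Icc_bot _ (by omega), prod_Icc_bot _ (by omega),
      show t+1+1 = t+2 from rfl, show t+2+1 = t+3 from rfl,
      Finset.prod_Icc_succ_top (by omega)]
    have epow : (j+1)^2 + (j+1) = (j^2+j) + (2*j+2) := by ring
    rw [epow, pow_add]
    have h2j : 2*(j+1) = 2*j+2 := by ring
    rw [h2j]
    have h3' : ((2:ℚ)^(2*j+2) - 1) ≠ 0 := by linarith
    field_simp [hQ.ne', hD.ne', h3']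
  · have hfrac : (1:ℚ) ≤ (2:ℚ)^(2*j+2) / ((2:ℚ)^(2*j+2) - 1) := by
      rw [le_div_iff₀ (by linarith)]; linarith
    simp only [e1, e2, show t+2-1 = t+1 from rfl]
    have ha : (1:ℚ) ≤ (2:ℚ)^(t+1) - 1 := by
      have : (2:ℚ)^1 ≤ 2^(t+1) := pow_le_pow_right₀ (by norm_num) (by omega)
      linarith
    have hb : (1:ℚ) ≤ (2:ℚ)^(t+2) - 1 := by
      have : (2:ℚ)^1 ≤ 2^(t+2) := pow_le_pow_right₀ (by norm_num) (by omega)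
      linarith
    have := mul_le_mul (mul_le_mul hfrac ha (by norm_num) (by linarith [hfrac]))
      hb (by norm_num) (by positivity)
    linarith
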